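/- Let H be a finite group, I a normal subgroup of H with H/I abelian, and let φ₁, φ₂ be irreducible complex representations of H such that Hom_I(Res_I φ₂, Res_I φ₁) ≠ 0. Then there exists a one-dimensional character χ of H trivial on I with φ₂ ≅ φ₁ ⊗ χ. -/
import Mathlib

set_option maxHeartbeats 1000000
set_option synthInstance.maxHeartbeats 400000

/-- Let `H` be a finite group, `I ⊴ H` with `H/I` abelian, and `φ₁, φ₂` irreducible
finite-dimensional complex representations of `H` with `Hom_I(Res_I φ₂, Res_I φ₁) ≠ 0`.
Then `φ₂ ≅ φ₁ ⊗ χ` for a one-dimensional character `χ` of `H` trivial on `I`. -/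
theorem stmt_13 {H V₁ V₂ : Type} [Group H] [Fintype H]
    [AddCommGroup V₁] [Module ℂ V₁] [AddCommGroup V₂] [Module ℂ V₂]
    [FiniteDimensional ℂ V₁] [FiniteDimensional ℂ V₂]
    (I : Subgroup H) [I.Normal] (hab : ∀ a b : H ⧸ I, a * b = b * a)
    (φ₁ : Representation ℂ H V₁) (φ₂ : Representation ℂ H V₂)
    (hirr₁ : Nontrivial V₁ ∧
      ∀ S : Submodule ℂ V₁, (∀ (g : H) (v : V₁), v ∈ S → φ₁ g v ∈ S) → S = ⊥ ∨ S = ⊤)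
    (hirr₂ : Nontrivial V₂ ∧
      ∀ S : Submodule ℂ V₂, (∀ (g : H) (v : V₂), v ∈ S → φ₂ g v ∈ S) → S = ⊥ ∨ S = ⊤)
    (hhom : ∃ f : V₂ →ₗ[ℂ] V₁, f ≠ 0 ∧ ∀ i ∈ I, ∀ v : V₂, f (φ₂ i v) = φ₁ i (f v)) :
    ∃ χ : H →* ℂˣ, (∀ i ∈ I, χ i = 1) ∧
      ∃ e : V₁ ≃ₗ[ℂ] V₂, ∀ (g : H) (v : V₁), e ((χ g : ℂ) • φ₁ g v) = φ₂ g (e v) := by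
  classical
  obtain ⟨f, hf0, hfI⟩ := hhom
  -- the submodule of I-equivariant maps
  let W : Submodule ℂ (V₂ →ₗ[ℂ] V₁) :=
    { carrier := {w | ∀ i ∈ I, ∀ v : V₂, w (φ₂ i v) = φ₁ i (w v)}
      add_mem' := fun ha hb i hi v => by simp [ha i hi v, hb i hi v]
      zero_mem' := fun i hi v => by simp
      smul_mem' := fun c w hw i hi v => by simp [hw i hi v] }
  have hfW : f ∈ W := hfI
  -- key computation lemmas
  have hφ₁mul : ∀ (a b : H) (v : V₁), φ₁ a (φ₁ b v) = φ₁ (a * b) v := by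
    intro a b v; rw [map_mul]; rfl
  have hφ₂mul : ∀ (a b : H) (v : V₂), φ₂ a (φ₂ b v) = φ₂ (a * b) v := by
    intro a b v; rw [map_mul]; rfl
  have mapsTo : ∀ g : H, ∀ w : V₂ →ₗ[ℂ] V₁, w ∈ W →
      (φ₁ g ∘ₗ w ∘ₗ φ₂ g⁻¹) ∈ W := by
    intro g w hw i hi v
    have hconj : g⁻¹ * i * g ∈ I := by
      have := Subgroup.Normal.conj_mem ‹I.Normal› i hi g⁻¹
      simpa using this
    simp only [LinearMap.comp_apply]
    rw [hφ₂mul g⁻¹ i v]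
    have : g⁻¹ * i = (g⁻¹ * i * g) * g⁻¹ := by group
    rw [this, ← hφ₂mul (g⁻¹ * i * g) g⁻¹ v, hw _ hconj, hφ₁mul, hφ₁mul]
    congr 1
    group
  -- the action of H on W
  have map_add' : ∀ (g : H) (x y : ↥W),
      φ₁ g ∘ₗ (x + y : ↥W).1 ∘ₗ φ₂ g⁻¹ = (φ₁ g ∘ₗ x.1 ∘ₗ φ₂ g⁻¹) + (φ₁ g ∘ₗ y.1 ∘ₗ φ₂ g⁻¹) := by
    intro g x y; ext v; simp
  let ρ0 : H → Module.End ℂ ↥W := fun g =>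
    { toFun := fun w => ⟨φ₁ g ∘ₗ w.1 ∘ₗ φ₂ g⁻¹, mapsTo g w.1 w.2⟩
      map_add' := fun x y => Subtype.ext (by ext v; simp)
      map_smul' := fun c x => Subtype.ext (by ext v; simp) }
  have ρ0_apply : ∀ (g : H) (w : ↥W) (v : V₂),
      ((ρ0 g w : ↥W) : V₂ →ₗ[ℂ] V₁) v = φ₁ g (w.1 (φ₂ g⁻¹ v)) := fun g w v => rfl
  have ρ0_I : ∀ i ∈ I, ρ0 i = 1 := by
    intro i hi
    ext w v
    rw [ρ0_apply]
    have : w.1 (φ₂ i⁻¹ v) = φ₁ i⁻¹ (w.1 v) := w.2 i⁻¹ (inv_mem hi) v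
    rw [this, hφ₁mul, mul_inv_cancel, map_one]
    rfl
  have ρ0_mul : ∀ g h : H, ρ0 (g * h) = ρ0 g * ρ0 h := by
    intro g h
    ext w v
    rw [Module.End.mul_apply, ρ0_apply, ρ0_apply, ρ0_apply, hφ₂mul, hφ₁mul]
    congr 2
    group
  let ρ : H →* Module.End ℂ ↥W :=
    { toFun := ρ0
      map_one' := ρ0_I 1 (one_mem I)
      map_mul' := ρ0_mul }
  have hcomm : ∀ g h : H, Commute (ρ g) (ρ h) := by
    intro g h
    have hc : (h * g)⁻¹ * (g * h) ∈ I := by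
      have : ((g * h : H) : H ⧸ I) = ((h * g : H) : H ⧸ I) := by
        rw [QuotientGroup.mk_mul, QuotientGroup.mk_mul, hab]
      exact (QuotientGroup.eq).mp this.symm
    have key : ρ0 (g * h) = ρ0 (h * g) := by
      have h1 : g * h = (h * g) * ((h * g)⁻¹ * (g * h)) := by group
      rw [h1, ρ0_mul, ρ0_I _ hc, mul_one]
    show ρ0 g * ρ0 h = ρ0 h * ρ0 g
    rw [← ρ0_mul, ← ρ0_mul, key]
  -- W is nontrivial and finite-dimensional
  have hW0 : (⟨f, hfW⟩ : ↥W) ≠ 0 := fun h => hf0 (congrArg Subtype.val h)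
  have : Nontrivial ↥W := nontrivial_of_ne _ _ hW0
  -- each ρ g is finitely semisimple
  have hss : ∀ g : H, (ρ g).IsFinitelySemisimple := by
    intro g
    have hn : (Fintype.card H : ℂ) ≠ 0 := by
      simp [Fintype.card_ne_zero]
    have hsq : Squarefree (Polynomial.X ^ Fintype.card H - 1 : Polynomial ℂ) :=
      (Polynomial.X_pow_sub_one_separable_iff.mpr hn).squarefree
    have hpow : ∀ (n : ℕ) (a : H), ρ0 a ^ n = ρ0 (a ^ n) := by
      intro n a
      induction n with
      | zero => rw [pow_zero, pow_zero, ρ0_I 1 (one_mem I)]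
      | succ n ih => rw [pow_succ, pow_succ, ih, ← ρ0_mul]
    have hz : Polynomial.aeval (ρ g) (Polynomial.X ^ Fintype.card H - 1 : Polynomial ℂ) = 0 := by
      have : Polynomial.aeval (ρ g) (Polynomial.X ^ Fintype.card H - 1 : Polynomial ℂ)
          = (ρ0 g) ^ Fintype.card H - 1 := by
        rw [map_sub, map_pow, Polynomial.aeval_X, map_one]
        rfl
      rw [this, hpow, pow_card_eq_one, ρ0_I 1 (one_mem I)]
      exact sub_self (1 : Module.End ℂ ↥W)
    exact (Module.End.isSemisimple_of_squarefree_aeval_eq_zero hsq hz).isFinitelySemisimple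
  -- simultaneous eigenvector
  have htop : ⨆ χ : H → ℂ, ⨅ g, (ρ g).maxGenEigenspace (χ g) = ⊤ :=
    Module.End.iSup_iInf_maxGenEigenspace_eq_top_of_iSup_maxGenEigenspace_eq_top_of_commute
      (fun g => ρ g) (fun g h _ => hcomm g h)
      (fun g => Module.End.iSup_maxGenEigenspace_eq_top (ρ g))
  have : ∃ χ : H → ℂ, (⨅ g, (ρ g).maxGenEigenspace (χ g)) ≠ ⊥ := by
    by_contra hcon
    push_neg at hcon
    have : (⊤ : Submodule ℂ ↥W) = ⊥ := by
      rw [← htop, iSup_eq_bot]; exact hcon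
    exact hW0 (by rw [← Submodule.mem_bot (R := ℂ), ← this]; trivial)
  obtain ⟨χ₀, hχ₀⟩ := this
  obtain ⟨w₀, hw₀mem, hw₀0⟩ := Submodule.exists_mem_ne_zero_of_ne_bot hχ₀
  have heig : ∀ g : H, ρ0 g w₀ = χ₀ g • w₀ := by
    intro g
    have hmem := (Submodule.mem_iInf _).mp hw₀mem g
    rw [(hss g).maxGenEigenspace_eq_eigenspace] at hmem
    exact (Module.End.mem_eigenspace_iff).mp hmem
  -- χ₀ is multiplicative
  have hsmul_inj := smul_left_injective ℂ hw₀0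
  have hχ₀one : χ₀ 1 = 1 := by
    apply hsmul_inj
    show χ₀ 1 • w₀ = (1 : ℂ) • w₀
    rw [← heig 1, ρ0_I 1 (one_mem I), one_smul]
    rfl
  have hχ₀mul : ∀ g h : H, χ₀ (g * h) = χ₀ g * χ₀ h := by
    intro g h
    apply hsmul_inj
    show χ₀ (g * h) • w₀ = (χ₀ g * χ₀ h) • w₀
    rw [← heig (g * h), ρ0_mul, Module.End.mul_apply, heig h, map_smul, heig g, smul_smul, mul_comm]
  have hχ₀I : ∀ i ∈ I, χ₀ i = 1 := by
    intro i hi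
    apply hsmul_inj
    show χ₀ i • w₀ = (1 : ℂ) • w₀
    rw [← heig i, one_smul, ρ0_I i hi]
    rfl
  let χmh : H →* ℂ := { toFun := χ₀, map_one' := hχ₀one, map_mul' := hχ₀mul }
  let χu : H →* ℂˣ := χmh.toHomUnits
  have hχu : ∀ g : H, (χu g : ℂ) = χ₀ g := fun g => rfl
  have hχ₀ne : ∀ g : H, χ₀ g ≠ 0 := fun g => by
    rw [← hχu]; exact Units.ne_zero _
  -- the eigenvector f₀ intertwines φ₂ and χ₀ ⊗ φ₁
  set f₀ : V₂ →ₗ[ℂ] V₁ := w₀.1 with hf₀def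
  have hf₀0 : f₀ ≠ 0 := fun h => hw₀0 (Subtype.ext h)
  have hkey : ∀ (g : H) (v : V₂), φ₁ g (f₀ v) = χ₀ g • f₀ (φ₂ g v) := by
    intro g v
    have h2 : φ₂ g⁻¹ (φ₂ g v) = v := by
      rw [hφ₂mul, inv_mul_cancel, map_one]; rfl
    have h1 : φ₁ g (f₀ (φ₂ g⁻¹ (φ₂ g v))) = χ₀ g • f₀ (φ₂ g v) := by
      have := congrArg (fun w : ↥W => (w : V₂ →ₗ[ℂ] V₁) (φ₂ g v)) (heig g)
      simpa [ρ0_apply] using this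
    rw [h2] at h1
    exact h1
  -- f₀ is bijective
  have hinj : Function.Injective f₀ := by
    have := hirr₂.2 (LinearMap.ker f₀) ?_
    · rcases this with h | h
      · exact LinearMap.ker_eq_bot.mp h
      · exact absurd (LinearMap.ker_eq_top.mp h) hf₀0
    · intro g v hv
      rw [LinearMap.mem_ker] at hv ⊢
      have := hkey g v
      rw [hv, map_zero] at this
      exact (smul_eq_zero.mp this.symm).resolve_left (hχ₀ne g)
  have hsurj : Function.Surjective f₀ := by
    have := hirr₁.2 (LinearMap.range f₀) ?_
    · rcases this with h | h
      · exact absurd (LinearMap.range_eq_bot.mp h) hf₀0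
      · exact LinearMap.range_eq_top.mp h
    · rintro g v ⟨u, rfl⟩
      rw [hkey g u]
      exact Submodule.smul_mem _ _ (LinearMap.mem_range_self _ _)
  let e' : V₂ ≃ₗ[ℂ] V₁ := LinearEquiv.ofBijective f₀ ⟨hinj, hsurj⟩
  refine ⟨χu⁻¹, ?_, e'.symm, ?_⟩
  · intro i hi
    ext
    show ((χu i)⁻¹ : ℂˣ) = (1 : ℂ)
    rw [Units.val_inv_eq_inv_val, hχu, hχ₀I i hi, inv_one]
  · intro g v
    have hval : ((χu⁻¹ : H →* ℂˣ) g : ℂ) = (χ₀ g)⁻¹ := by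
      show ((χu g)⁻¹ : ℂˣ) = ((χ₀ g)⁻¹ : ℂ)
      rw [Units.val_inv_eq_inv_val, hχu]
    rw [hval]
    set u : V₂ := e'.symm v with hu
    have hv : f₀ u = v := e'.apply_symm_apply v
    rw [← hv, hkey g u, inv_smul_smul₀ (hχ₀ne g)]
    show e'.symm (e' (φ₂ g u)) = φ₂ g u
    exact e'.symm_apply_apply _
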